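/- Suppose f is C² on [l,r], g is C³ on [l,r] and strictly positive on (l,r) with the non-integrability conditions at l and r, and the limits lim_{x→l⁺} f(x)/g(x) and lim_{x→r⁻} f(x)/g(x) exist and are finite. Then the function H(x) = f(Φ⁻¹(x))/g(Φ⁻¹(x)) − (1/2) g'(Φ⁻¹(x)) − μ is of class C² on ℝ with H+μ, H', and H'' all uniformly bounded on ℝ by a constant independent of μ; in particular, H and H' are globally Lipschitz continuous. -/

import Mathlib

open MeasureTheory Set Filter Real

lemma bound_aux (l r : ℝ) (hlr : l < r) (u : ℝ → ℝ) (Ll Lr : ℝ)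
    (hc : ContinuousOn u (Set.Ioo l r))
    (hl : Tendsto u (nhdsWithin l (Set.Ioo l r)) (nhds Ll))
    (hr : Tendsto u (nhdsWithin r (Set.Ioo l r)) (nhds Lr)) :
    ∃ C : ℝ, 0 ≤ C ∧ ∀ w ∈ Set.Ioo l r, |u w| ≤ C := by
  suffices h : ∃ C : ℝ, ∀ w ∈ Set.Ioo l r, |u w| ≤ C by
    obtain ⟨C, hC⟩ := h
    exact ⟨max C 0, le_max_right _ _, fun w hw => le_trans (hC w hw) (le_max_left _ _)⟩
  obtain ⟨δ, hδ, hδ'⟩ := (Metric.tendsto_nhdsWithin_nhds.mp hl) 1 one_pos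
  obtain ⟨ε, hε, hε'⟩ := (Metric.tendsto_nhdsWithin_nhds.mp hr) 1 one_pos
  set a := l + min (δ/2) ((r - l)/2) with ha
  set b := r - min (ε/2) ((r - l)/2) with hb
  have hminδ : 0 < min (δ/2) ((r - l)/2) := lt_min (by linarith) (by linarith)
  have hminε : 0 < min (ε/2) ((r - l)/2) := lt_min (by linarith) (by linarith)
  have hla : l < a := by simp only [ha]; linarith
  have har : a < r := by
    have : min (δ/2) ((r - l)/2) ≤ (r - l)/2 := min_le_right _ _
    simp only [ha]; linarith
  have hlb : l < b := by
    have : min (ε/2) ((r - l)/2) ≤ (r - l)/2 := min_le_right _ _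
    simp only [hb]; linarith
  have hbr : b < r := by simp only [hb]; linarith
  have hsub : Set.Icc (min a b) (max a b) ⊆ Set.Ioo l r := by
    intro w hw
    constructor
    · exact lt_of_lt_of_le (lt_min hla hlb) hw.1
    · exact lt_of_le_of_lt hw.2 (max_lt har hbr)
  obtain ⟨M, hM⟩ := (isCompact_Icc (a := min a b) (b := max a b)).exists_bound_of_continuousOn
    (hc.mono hsub)
  refine ⟨max M (max (|Ll| + 1) (|Lr| + 1)), fun w hw => ?_⟩
  rcases lt_or_ge w a with h1 | h1
  · have hd : dist w l < δ := by
      rw [Real.dist_eq, abs_of_pos (by linarith [hw.1])]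
      have : min (δ/2) ((r - l)/2) ≤ δ/2 := min_le_left _ _
      simp only [ha] at h1; linarith
    have := hδ' hw hd
    rw [Real.dist_eq] at this
    calc |u w| ≤ |Ll| + 1 := by
          have := abs_sub_abs_le_abs_sub (u w) Ll; linarith
      _ ≤ _ := le_max_of_le_right (le_max_left _ _)
  rcases lt_or_ge b w with h2 | h2
  · have hd : dist w r < ε := by
      rw [Real.dist_eq, abs_of_neg (by linarith [hw.2])]
      have : min (ε/2) ((r - l)/2) ≤ ε/2 := min_le_left _ _
      simp only [hb] at h2; linarith
    have := hε' hw hd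
    rw [Real.dist_eq] at this
    calc |u w| ≤ |Lr| + 1 := by
          have := abs_sub_abs_le_abs_sub (u w) Lr; linarith
      _ ≤ _ := le_max_of_le_right (le_max_right _ _)
  · have : w ∈ Set.Icc (min a b) (max a b) :=
      ⟨le_trans (min_le_left _ _) h1, le_trans h2 (le_max_right _ _)⟩
    exact le_trans (hM w this) (le_max_left _ _)

/-- The transformed drift `H μ x = f(Φ⁻¹ x)/g(Φ⁻¹ x) - (1/2) g'(Φ⁻¹ x) - μ`
is `C²` with `H+μ`, `H'`, `H''` uniformly bounded by a constant independent of `μ`;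
in particular `H` and `H'` are globally Lipschitz. -/
theorem transformed_drift_C2_bounded
    (l r w₀ : ℝ) (hlr : l < r) (hw₀ : w₀ ∈ Set.Ioo l r)
    (f g : ℝ → ℝ)
    (hf : ContDiffOn ℝ 2 f (Set.Icc l r))
    (hg : ContDiffOn ℝ 3 g (Set.Icc l r))
    (hgpos : ∀ x ∈ Set.Ioo l r, 0 < g x)
    (Φ Ψ : ℝ → ℝ)
    (hΦ : ∀ x, Φ x = ∫ w in w₀..x, 1 / g w)
    (hlint : Tendsto Φ (nhdsWithin l (Set.Ioo l r)) atBot)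
    (hrint : Tendsto Φ (nhdsWithin r (Set.Ioo l r)) atTop)
    (hΨmem : ∀ y, Ψ y ∈ Set.Ioo l r)
    (hΨΦ : ∀ x ∈ Set.Ioo l r, Ψ (Φ x) = x)
    (hΦΨ : ∀ y, Φ (Ψ y) = y)
    (hliml : ∃ Ll : ℝ, Tendsto (fun x => f x / g x) (nhdsWithin l (Set.Ioi l)) (nhds Ll))
    (hlimr : ∃ Lr : ℝ, Tendsto (fun x => f x / g x) (nhdsWithin r (Set.Iio r)) (nhds Lr))
    (H : ℝ → ℝ → ℝ)
    (hH : ∀ μ x, H μ x = f (Ψ x) / g (Ψ x) - (1 / 2) * deriv g (Ψ x) - μ) :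
    (∀ μ : ℝ, ContDiff ℝ 2 (H μ)) ∧
    (∃ C : ℝ, ∀ μ x : ℝ,
      |H μ x + μ| ≤ C ∧ |deriv (H μ) x| ≤ C ∧ |deriv (deriv (H μ)) x| ≤ C) ∧
    (∃ C : NNReal, ∀ μ : ℝ, LipschitzWith C (H μ) ∧ LipschitzWith C (deriv (H μ))) := by
  obtain ⟨Ll, hLl⟩ := hliml
  obtain ⟨Lr, hLr⟩ := hlimr
  set s := Set.Ioo l r with hs
  set K := Set.Icc l r with hK
  have hsK : s ⊆ K := Set.Ioo_subset_Icc_self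
  have hlK : l ∈ K := ⟨le_rfl, hlr.le⟩
  have hrK : r ∈ K := ⟨hlr.le, le_rfl⟩
  have hso : IsOpen s := isOpen_Ioo
  have hud : UniqueDiffOn ℝ K := uniqueDiffOn_Icc hlr
  have hKnhds : ∀ x ∈ s, K ∈ nhds x := fun x hx => Icc_mem_nhds hx.1 hx.2
  have hgne : ∀ x ∈ s, g x ≠ 0 := fun x hx => (hgpos x hx).ne'
  -- derivatives as derivWithin
  set g1 := derivWithin g K with hg1
  set g2 := derivWithin g1 K with hg2
  set g3 := derivWithin g2 K with hg3
  set f1 := derivWithin f K with hf1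
  set f2 := derivWithin f1 K with hf2
  have hg1cd : ContDiffOn ℝ 2 g1 K := hg.derivWithin hud (by norm_num)
  have hg2cd : ContDiffOn ℝ 1 g2 K := hg1cd.derivWithin hud (by norm_num)
  have hg3c : ContinuousOn g3 K := hg2cd.continuousOn_derivWithin hud (by norm_num)
  have hf1cd : ContDiffOn ℝ 1 f1 K := hf.derivWithin hud (by norm_num)
  have hf2c : ContinuousOn f2 K := hf1cd.continuousOn_derivWithin hud (by norm_num)
  have hgc : ContinuousOn g K := hg.continuousOn
  have hg1c : ContinuousOn g1 K := hg1cd.continuousOn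
  have hg2c : ContinuousOn g2 K := hg2cd.continuousOn
  have hfc : ContinuousOn f K := hf.continuousOn
  have hf1c : ContinuousOn f1 K := hf1cd.continuousOn
  -- HasDerivAt facts on s
  have hDA : ∀ (v : ℝ → ℝ) (n : WithTop ℕ∞), 1 ≤ n → ContDiffOn ℝ n v K →
      ∀ x ∈ s, HasDerivAt v (derivWithin v K x) x := by
    intro v n hn hv x hx
    have hd : DifferentiableAt ℝ v x :=
      ((hv.differentiableOn (ne_of_gt (lt_of_lt_of_le zero_lt_one hn))) x (hsK hx)).differentiableAt (hKnhds x hx)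
    rw [derivWithin_of_mem_nhds (hKnhds x hx)]
    exact hd.hasDerivAt
  have hgd : ∀ x ∈ s, HasDerivAt g (g1 x) x := hDA g 3 (by norm_num) hg
  have hg1d : ∀ x ∈ s, HasDerivAt g1 (g2 x) x := hDA g1 2 (by norm_num) hg1cd
  have hg2d : ∀ x ∈ s, HasDerivAt g2 (g3 x) x := hDA g2 1 (by norm_num) hg2cd
  have hfd : ∀ x ∈ s, HasDerivAt f (f1 x) x := hDA f 2 (by norm_num) hf
  have hf1d : ∀ x ∈ s, HasDerivAt f1 (f2 x) x := hDA f1 1 (by norm_num) hf1cd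
  have hderiv_g : ∀ x ∈ s, deriv g x = g1 x := fun x hx => (hgd x hx).deriv
  -- Φ has derivative 1/g on s
  have hinvc : ContinuousOn (fun w => 1 / g w) s :=
    ContinuousOn.div continuousOn_const (hgc.mono hsK) (fun x hx => hgne x hx)
  have hΦd : ∀ x ∈ s, HasDerivAt Φ (1 / g x) x := by
    intro x hx
    have hint : IntervalIntegrable (fun w => 1 / g w) MeasureTheory.volume w₀ x := by
      apply ContinuousOn.intervalIntegrable
      exact hinvc.mono (Set.ordConnected_Ioo.uIcc_subset hw₀ hx)
    have hmeas : StronglyMeasurableAtFilter (fun w => 1 / g w) (nhds x) MeasureTheory.volume :=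
      hinvc.stronglyMeasurableAtFilter hso x hx
    have hca : ContinuousAt (fun w => 1 / g w) x := hinvc.continuousAt (hso.mem_nhds hx)
    have := intervalIntegral.integral_hasDerivAt_right hint hmeas hca
    have heq : Φ = fun u => ∫ w in w₀..u, 1 / g w := funext hΦ
    rw [heq]
    exact this
  -- Φ strictly monotone on s
  have hΦmono : StrictMonoOn Φ s := by
    apply strictMonoOn_of_deriv_pos (convex_Ioo l r)
    · exact fun x hx => (hΦd x hx).continuousAt.continuousWithinAt
    · intro x hx
      rw [interior_Ioo] at hx
      rw [(hΦd x hx).deriv]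
      exact div_pos one_pos (hgpos x hx)
  -- Ψ strictly monotone
  have hΨmono : StrictMono Ψ := by
    intro y1 y2 h12
    by_contra hcon
    push_neg at hcon
    have : Φ (Ψ y2) ≤ Φ (Ψ y1) := by
      rcases eq_or_lt_of_le hcon with he | hl2
      · rw [he]
      · exact le_of_lt (hΦmono (hΨmem y2) (hΨmem y1) hl2)
    rw [hΦΨ, hΦΨ] at this
    exact absurd this (not_le.mpr h12)
  have hΨrange : Ψ '' Set.univ = s := by
    apply Set.Subset.antisymm
    · rintro _ ⟨y, -, rfl⟩; exact hΨmem y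
    · intro x hx; exact ⟨Φ x, Set.mem_univ _, hΨΦ x hx⟩
  have hΨcont : Continuous Ψ := by
    rw [continuous_iff_continuousAt]
    intro y
    apply StrictMonoOn.continuousAt_of_image_mem_nhds (s := Set.univ)
      (fun a _ b _ hab => hΨmono hab) Filter.univ_mem
    rw [hΨrange]
    exact hso.mem_nhds (hΨmem y)
  have hΨd : ∀ y, HasDerivAt Ψ (g (Ψ y)) y := by
    intro y
    have h1 : HasDerivAt Φ (1 / g (Ψ y)) (Ψ y) := hΦd _ (hΨmem y)
    have h2 : (1 / g (Ψ y)) ≠ 0 := one_div_ne_zero (hgne _ (hΨmem y))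
    have := HasDerivAt.of_local_left_inverse (hΨcont.continuousAt) h1 h2
      (Filter.Eventually.of_forall hΦΨ)
    simpa [one_div] using this
  -- the quotient q and the three functions F, F1, F2
  set q : ℝ → ℝ := fun w => f w / g w with hq
  have hqc : ContinuousOn q s :=
    ContinuousOn.div (hfc.mono hsK) (hgc.mono hsK) (fun x hx => hgne x hx)
  have hqd : ∀ x ∈ s, HasDerivAt q ((f1 x - q x * g1 x) / g x) x := by
    intro x hx
    have h0 := (hfd x hx).div (hgd x hx) (hgne x hx)
    have he : (f1 x - q x * g1 x) / g x = (f1 x * g x - f x * g1 x) / g x ^ 2 := by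
      simp only [hq]
      rw [div_eq_div_iff (hgne x hx) (pow_ne_zero 2 (hgne x hx))]
      field_simp [hgne x hx]
    rw [he]
    exact h0
  set F : ℝ → ℝ := fun w => q w - (1/2) * g1 w with hF
  set F1 : ℝ → ℝ := fun w => f1 w - q w * g1 w - (1/2) * (g2 w * g w) with hF1
  set F2 : ℝ → ℝ := fun w => f2 w * g w - (f1 w - q w * g1 w) * g1 w - q w * (g2 w * g w)
      - (1/2) * ((g3 w * g w + g2 w * g1 w) * g w) with hF2
  have hFd : ∀ x ∈ s, HasDerivAt F (F1 x / g x) x := by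
    intro x hx
    have h0 := (hqd x hx).sub ((hg1d x hx).const_mul (1/2))
    have he : F1 x / g x = (f1 x - q x * g1 x) / g x - 1/2 * g2 x := by
      simp only [hF1, hq]
      field_simp [hgne x hx]
    rw [he]
    exact h0
  have hF1d : ∀ x ∈ s, HasDerivAt F1 (F2 x / g x) x := by
    intro x hx
    have h0 := ((hf1d x hx).sub ((hqd x hx).mul (hg1d x hx))).sub
      (((hg2d x hx).mul (hgd x hx)).const_mul (1/2))
    have he : F2 x / g x
        = f2 x - ((f1 x - q x * g1 x) / g x * g1 x + q x * g2 x)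
          - 1/2 * (g3 x * g x + g2 x * g1 x) := by
      simp only [hF2, hq]
      field_simp [hgne x hx]
      ring
    rw [he]
    exact h0
  -- continuity of F, F1, F2 on s
  have hFc : ContinuousOn F s := hqc.sub ((continuousOn_const.mul (hg1c.mono hsK)))
  have hF1c : ContinuousOn F1 s :=
    ((hf1c.mono hsK).sub (hqc.mul (hg1c.mono hsK))).sub
      (continuousOn_const.mul ((hg2c.mono hsK).mul (hgc.mono hsK)))
  have hF2c : ContinuousOn F2 s := by
    apply ContinuousOn.sub
    apply ContinuousOn.sub
    apply ContinuousOn.sub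
    · exact (hf2c.mono hsK).mul (hgc.mono hsK)
    · exact ((hf1c.mono hsK).sub (hqc.mul (hg1c.mono hsK))).mul (hg1c.mono hsK)
    · exact hqc.mul ((hg2c.mono hsK).mul (hgc.mono hsK))
    · exact continuousOn_const.mul
        ((((hg3c.mono hsK).mul (hgc.mono hsK)).add
          ((hg2c.mono hsK).mul (hg1c.mono hsK))).mul (hgc.mono hsK))
  -- limits at the endpoints
  have hql : Tendsto q (nhdsWithin l s) (nhds Ll) :=
    hLl.mono_left (nhdsWithin_mono l Set.Ioo_subset_Ioi_self)
  have hqr : Tendsto q (nhdsWithin r s) (nhds Lr) :=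
    hLr.mono_left (nhdsWithin_mono r Set.Ioo_subset_Iio_self)
  have hTl : ∀ (v : ℝ → ℝ), ContinuousOn v K → Tendsto v (nhdsWithin l s) (nhds (v l)) :=
    fun v hv => (hv l hlK).mono_left (nhdsWithin_mono l hsK)
  have hTr : ∀ (v : ℝ → ℝ), ContinuousOn v K → Tendsto v (nhdsWithin r s) (nhds (v r)) :=
    fun v hv => (hv r hrK).mono_left (nhdsWithin_mono r hsK)
  -- bounds
  obtain ⟨C0, hC0nn, hC0⟩ := bound_aux l r hlr F _ _ hFc
    (hql.sub ((hTl g1 hg1c).const_mul (1/2)))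
    (hqr.sub ((hTr g1 hg1c).const_mul (1/2)))
  obtain ⟨C1, hC1nn, hC1⟩ := bound_aux l r hlr F1 _ _ hF1c
    (((hTl f1 hf1c).sub (hql.mul (hTl g1 hg1c))).sub
      (((hTl g2 hg2c).mul (hTl g hgc)).const_mul (1/2)))
    (((hTr f1 hf1c).sub (hqr.mul (hTr g1 hg1c))).sub
      (((hTr g2 hg2c).mul (hTr g hgc)).const_mul (1/2)))
  obtain ⟨C2, hC2nn, hC2⟩ := bound_aux l r hlr F2 _ _ hF2c
    ((((((hTl f2 hf2c).mul (hTl g hgc)).sub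
        (((hTl f1 hf1c).sub (hql.mul (hTl g1 hg1c))).mul (hTl g1 hg1c))).sub
        (hql.mul ((hTl g2 hg2c).mul (hTl g hgc)))).sub
        (((((hTl g3 hg3c).mul (hTl g hgc)).add
          ((hTl g2 hg2c).mul (hTl g1 hg1c))).mul (hTl g hgc)).const_mul (1/2))))
    ((((((hTr f2 hf2c).mul (hTr g hgc)).sub
        (((hTr f1 hf1c).sub (hqr.mul (hTr g1 hg1c))).mul (hTr g1 hg1c))).sub
        (hqr.mul ((hTr g2 hg2c).mul (hTr g hgc)))).sub
        (((((hTr g3 hg3c).mul (hTr g hgc)).add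
          ((hTr g2 hg2c).mul (hTr g1 hg1c))).mul (hTr g hgc)).const_mul (1/2))))
  -- structure of H
  have hHeq : ∀ μ : ℝ, H μ = fun x => F (Ψ x) - μ := by
    intro μ
    funext x
    rw [hH, hderiv_g _ (hΨmem x)]
  have hHd : ∀ μ : ℝ, ∀ x, HasDerivAt (H μ) (F1 (Ψ x)) x := by
    intro μ x
    have h1 : HasDerivAt F (F1 (Ψ x) / g (Ψ x)) (Ψ x) := hFd _ (hΨmem x)
    have h2 := (h1.comp x (hΨd x)).sub_const μ
    rw [hHeq μ]
    have h3 : F1 (Ψ x) / g (Ψ x) * g (Ψ x) = F1 (Ψ x) :=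
      div_mul_cancel₀ _ (hgne _ (hΨmem x))
    rw [h3] at h2
    exact h2
  have hderivH : ∀ μ : ℝ, deriv (H μ) = fun x => F1 (Ψ x) :=
    fun μ => funext fun x => (hHd μ x).deriv
  have hHd2 : ∀ x, HasDerivAt (fun x => F1 (Ψ x)) (F2 (Ψ x)) x := by
    intro x
    have h1 : HasDerivAt F1 (F2 (Ψ x) / g (Ψ x)) (Ψ x) := hF1d _ (hΨmem x)
    have h2 := h1.comp x (hΨd x)
    have h3 : F2 (Ψ x) / g (Ψ x) * g (Ψ x) = F2 (Ψ x) :=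
      div_mul_cancel₀ _ (hgne _ (hΨmem x))
    rw [h3] at h2
    exact h2
  have hderiv2H : ∀ μ : ℝ, ∀ x, deriv (deriv (H μ)) x = F2 (Ψ x) := by
    intro μ x
    rw [hderivH μ]
    exact (hHd2 x).deriv
  have hderivF2cont : Continuous fun x => F2 (Ψ x) :=
    hF2c.comp_continuous hΨcont (fun x => hΨmem x)
  have hdiffH : ∀ μ : ℝ, Differentiable ℝ (H μ) := fun μ x => (hHd μ x).differentiableAt
  have hdiffH1 : Differentiable ℝ (fun x => F1 (Ψ x)) := fun x => (hHd2 x).differentiableAt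
  -- C² smoothness
  have hC2smooth : ∀ μ : ℝ, ContDiff ℝ 2 (H μ) := by
    intro μ
    rw [show (2 : WithTop ℕ∞) = 1 + 1 from by norm_num, contDiff_succ_iff_deriv]
    refine ⟨hdiffH μ, by norm_num, ?_⟩
    rw [hderivH μ, contDiff_one_iff_deriv]
    refine ⟨hdiffH1, ?_⟩
    have : deriv (fun x => F1 (Ψ x)) = fun x => F2 (Ψ x) :=
      funext fun x => (hHd2 x).deriv
    rw [this]
    exact hderivF2cont
  refine ⟨hC2smooth, ?_, ?_⟩
  · refine ⟨max C0 (max C1 C2), fun μ x => ?_⟩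
    refine ⟨?_, ?_, ?_⟩
    · have : H μ x + μ = F (Ψ x) := by rw [hHeq μ]; ring
      rw [this]
      exact le_trans (hC0 _ (hΨmem x)) (le_max_left _ _)
    · rw [hderivH μ]
      exact le_trans (hC1 _ (hΨmem x)) (le_max_of_le_right (le_max_left _ _))
    · rw [hderiv2H μ x]
      exact le_trans (hC2 _ (hΨmem x)) (le_max_of_le_right (le_max_right _ _))
  · refine ⟨Real.toNNReal (max C1 C2), fun μ => ?_⟩
    have hbound : ∀ (u : ℝ → ℝ), (∀ x, |u x| ≤ max C1 C2) → ∀ x : ℝ,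
        ‖u x‖₊ ≤ Real.toNNReal (max C1 C2) := by
      intro u hu x
      rw [← NNReal.coe_le_coe, coe_nnnorm, Real.coe_toNNReal _ (le_max_of_le_left hC1nn)]
      exact hu x
    constructor
    · apply lipschitzWith_of_nnnorm_deriv_le (hdiffH μ)
      intro x
      apply hbound (deriv (H μ))
      intro y
      rw [hderivH μ]
      exact le_trans (hC1 _ (hΨmem y)) (le_max_left _ _)
    · apply lipschitzWith_of_nnnorm_deriv_le
      · rw [hderivH μ]; exact hdiffH1
      · intro x
        apply hbound (deriv (deriv (H μ)))
        intro y
        rw [hderiv2H μ y]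
        exact le_trans (hC2 _ (hΨmem y)) (le_max_right _ _)
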